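/- Let e be an integer with e ∉ {−1, 0, 1}, let 2 ≤ a < b be integers such that a does not divide b, set n = a + b, and assume gcd(u, eᵘ − 1) = 1 (gcd in ℤ) for each u ∈ {a, b, a + b}. Let α ∈ Sₙ be a product of two disjoint cycles of lengths a and b covering all n points (i.e. α.cycleType = {a, b}). Then the only solution of the power conjugate equation (e*α) is the trivial one, y = 1. -/

import Mathlib

namespace PCE
open Equiv Equiv.Perm Finset
set_option linter.unusedSectionVars false

open Equiv Equiv.Perm Finset

set_option linter.unusedSectionVars false

variable {β : Type*} [Fintype β] [DecidableEq β]

/-- orbit of a point under a permutation, as a Finset -/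
def orb (f : Equiv.Perm β) (x : β) : Finset β := Finset.univ.filter (f.SameCycle x)

lemma mem_orb {f : Equiv.Perm β} {x u : β} : u ∈ orb f x ↔ f.SameCycle x u := by
  simp [orb]

lemma self_mem_orb (f : Equiv.Perm β) (x : β) : x ∈ orb f x := mem_orb.2 (Equiv.Perm.SameCycle.refl _ _)

lemma orb_eq_of_mem {f : Equiv.Perm β} {x u : β} (h : u ∈ orb f x) : orb f u = orb f x := by
  rw [mem_orb] at h
  ext v
  rw [mem_orb, mem_orb]
  exact ⟨fun hv => h.trans hv, fun hv => h.symm.trans hv⟩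

lemma mem_periodicPts (f : Equiv.Perm β) (x : β) : x ∈ Function.periodicPts ⇑f := by
  refine ⟨orderOf f, orderOf_pos f, ?_⟩
  show (⇑f)^[orderOf f] x = x
  rw [← Equiv.Perm.coe_pow, pow_orderOf_eq_one]
  rfl

lemma T_pos (f : Equiv.Perm β) (x : β) : 0 < Function.minimalPeriod ⇑f x :=
  Function.minimalPeriod_pos_of_mem_periodicPts (mem_periodicPts f x)

lemma pow_T (f : Equiv.Perm β) (x : β) : (f ^ Function.minimalPeriod ⇑f x) x = x := by
  rw [Equiv.Perm.coe_pow]; exact Function.iterate_minimalPeriod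

lemma mem_orb_iff_exists_lt {f : Equiv.Perm β} {x u : β} :
    u ∈ orb f x ↔ ∃ i < Function.minimalPeriod ⇑f x, (f ^ i) x = u := by
  rw [mem_orb]
  constructor
  · intro h
    obtain ⟨i, -, hi⟩ := h.exists_pow_eq'
    refine ⟨i % Function.minimalPeriod ⇑f x, Nat.mod_lt _ (T_pos f x), ?_⟩
    rw [Equiv.Perm.coe_pow] at hi ⊢
    rw [Function.iterate_mod_minimalPeriod_eq, hi]
  · rintro ⟨i, -, hi⟩
    exact ⟨(i : ℤ), by simpa using hi⟩

lemma orb_eq_image (f : Equiv.Perm β) (x : β) :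
    orb f x = (Finset.range (Function.minimalPeriod ⇑f x)).image (fun i => (f ^ i) x) := by
  ext u
  rw [mem_orb_iff_exists_lt]
  simp

lemma card_orb (f : Equiv.Perm β) (x : β) :
    (orb f x).card = Function.minimalPeriod ⇑f x := by
  rw [orb_eq_image, Finset.card_image_of_injOn, Finset.card_range]
  intro i hi j hj hij
  simp only [Finset.coe_range, Set.mem_Iio] at hi hj
  simp only [Equiv.Perm.coe_pow] at hij
  exact (Function.iterate_eq_iterate_iff_of_lt_minimalPeriod hi hj).1 hij

lemma zpow_fix_iff {f : Equiv.Perm β} {x : β} {i : ℤ} :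
    (f ^ i) x = x ↔ (Function.minimalPeriod ⇑f x : ℤ) ∣ i := by
  set T := Function.minimalPeriod ⇑f x with hT
  have hTpos : 0 < T := T_pos f x
  have hfix : ∀ m : ℤ, (f ^ ((T : ℤ) * m)) x = x := by
    intro m
    have h1 : Function.IsFixedPt (⇑(f ^ T)) x := pow_T f x
    have := h1.perm_zpow m
    rw [← zpow_natCast f T, ← zpow_mul] at this
    exact this
  constructor
  · intro h
    have h0 : i % (T : ℤ) + (T:ℤ) * (i / (T:ℤ)) = i := Int.emod_add_mul_ediv i T
    have hr : (f ^ (i % (T : ℤ))) x = x := by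
      have : (f ^ (i % (T:ℤ) + (T:ℤ) * (i / (T:ℤ)))) x = x := by rw [h0]; exact h
      rw [zpow_add, Equiv.Perm.mul_apply, hfix] at this
      exact this
    have hnn : 0 ≤ i % (T:ℤ) := Int.emod_nonneg i (by exact_mod_cast hTpos.ne')
    have hlt : i % (T:ℤ) < T := Int.emod_lt_of_pos i (by exact_mod_cast hTpos)
    set r := (i % (T:ℤ)).toNat with hrdef
    have hr' : (f ^ r) x = x := by
      rw [← zpow_natCast]
      rwa [hrdef, Int.toNat_of_nonneg hnn]
    have hrlt : r < T := by omega
    by_cases hr0 : r = 0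
    · have : i % (T:ℤ) = 0 := by omega
      exact Int.dvd_of_emod_eq_zero this
    · exfalso
      have hper : Function.IsPeriodicPt ⇑f r x := by
        show (⇑f)^[r] x = x
        rw [← Equiv.Perm.coe_pow]; exact hr'
      have := hper.minimalPeriod_le (Nat.pos_of_ne_zero hr0)
      omega
  · rintro ⟨m, rfl⟩
    exact hfix m






/-- Counting lemma: if `C` is invariant and all points have period `d`, then `d ∣ C.card`. -/
lemma dvd_card_of_orbits {f : Equiv.Perm β} {C : Finset β} {d : ℕ}
    (hinv : ∀ w ∈ C, orb f w ⊆ C) (hper : ∀ w ∈ C, (orb f w).card = d) :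
    d ∣ C.card := by
  classical
  have hmaps : ∀ w ∈ C, orb f w ∈ C.image (orb f) := fun w hw => Finset.mem_image_of_mem _ hw
  rw [Finset.card_eq_sum_card_fiberwise hmaps]
  have : ∀ s ∈ C.image (orb f), (C.filter (fun z => orb f z = s)).card = d := by
    intro s hs
    obtain ⟨w0, hw0, rfl⟩ := Finset.mem_image.1 hs
    have hset : C.filter (fun z => orb f z = orb f w0) = orb f w0 := by
      ext u
      simp only [Finset.mem_filter]
      constructor
      · rintro ⟨hu, h⟩
        rw [← h]; exact self_mem_orb f u
      · intro hu
        exact ⟨hinv w0 hw0 hu, orb_eq_of_mem hu⟩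
    rw [hset]
    exact hper w0 hw0
  rw [Finset.sum_congr rfl this, Finset.sum_const, smul_eq_mul]
  exact dvd_mul_left d _

/-- number of solutions of a linear congruence divides the modulus (when nonempty) -/
lemma count_lin_dvd (d : ℕ) (hd : 0 < d) (c t : ℤ)
    (hne : ((Finset.range d).filter (fun i : ℕ => (d:ℤ) ∣ (c * (i:ℤ) + t))).Nonempty) :
    ((Finset.range d).filter (fun i : ℕ => (d:ℤ) ∣ (c * (i:ℤ) + t))).card ∣ d := by
  haveI : NeZero d := ⟨hd.ne'⟩
  have hcard1 : ((Finset.range d).filter (fun i : ℕ => (d:ℤ) ∣ (c * (i:ℤ) + t))).card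
      = (Finset.univ.filter (fun x : ZMod d => (c : ZMod d) * x + (t : ZMod d) = 0)).card := by
    apply Finset.card_bij (fun i _ => ((i : ℕ) : ZMod d))
    · intro i hi
      simp only [Finset.mem_filter, Finset.mem_range] at hi
      simp only [Finset.mem_filter, Finset.mem_univ, true_and]
      have := (ZMod.intCast_zmod_eq_zero_iff_dvd (c * (i:ℤ) + t) d).2 hi.2
      push_cast at this
      convert this using 2
    · intro i hi j hj hij
      simp only [Finset.mem_filter, Finset.mem_range] at hi hj
      have : ((i : ZMod d)).val = ((j : ZMod d)).val := by rw [hij]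
      rwa [ZMod.val_natCast_of_lt hi.1, ZMod.val_natCast_of_lt hj.1] at this
    · intro x hx
      simp only [Finset.mem_filter, Finset.mem_univ, true_and] at hx
      refine ⟨x.val, ?_, by simp [ZMod.natCast_val, ZMod.cast_id]⟩
      simp only [Finset.mem_filter, Finset.mem_range]
      refine ⟨ZMod.val_lt x, ?_⟩
      rw [← ZMod.intCast_zmod_eq_zero_iff_dvd]
      push_cast
      rw [ZMod.natCast_val, ZMod.cast_id]
      exact hx
  have hne2 : (Finset.univ.filter (fun x : ZMod d => (c : ZMod d) * x + (t : ZMod d) = 0)).Nonempty := by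
    rw [← Finset.card_pos, ← hcard1, Finset.card_pos]; exact hne
  rw [hcard1]
  obtain ⟨x0, hx0⟩ := hne2
  simp only [Finset.mem_filter, Finset.mem_univ, true_and] at hx0
  -- translate solution set to kernel
  have hcard2 : (Finset.univ.filter (fun x : ZMod d => (c : ZMod d) * x + (t : ZMod d) = 0)).card
      = (Finset.univ.filter (fun x : ZMod d => (c : ZMod d) * x = 0)).card := by
    apply Finset.card_bij (fun x _ => x - x0)
    · intro x hx
      simp only [Finset.mem_filter, Finset.mem_univ, true_and] at hx ⊢
      rw [mul_sub]
      linear_combination hx - hx0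
    · intro x _ y _ h
      exact sub_left_injective h
    · intro x hx
      simp only [Finset.mem_filter, Finset.mem_univ, true_and] at hx
      refine ⟨x + x0, ?_, by ring⟩
      simp only [Finset.mem_filter, Finset.mem_univ, true_and]
      rw [mul_add, hx, zero_add, hx0]
  rw [hcard2]
  -- kernel is an additive subgroup; its cardinality divides d
  have hker : (Finset.univ.filter (fun x : ZMod d => (c : ZMod d) * x = 0)).card
      = Nat.card (AddMonoidHom.mulLeft (c : ZMod d)).ker := by
    rw [Nat.card_eq_fintype_card]
    rw [← Fintype.card_subtype]
    apply Fintype.card_congr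
    apply Equiv.subtypeEquivRight
    intro x
    simp [AddMonoidHom.mem_ker, AddMonoidHom.mulLeft]
  rw [hker]
  have := AddSubgroup.card_addSubgroup_dvd_card (AddMonoidHom.mulLeft (c : ZMod d)).ker
  rwa [Nat.card_eq_fintype_card (α := ZMod d), ZMod.card] at this





section conj
variable {α y : Equiv.Perm β} {e : ℤ}

lemma hconj (hy : α * y * α⁻¹ = y ^ e) (k : ℕ) (i : ℤ) :
    α ^ k * y ^ i * (α ^ k)⁻¹ = y ^ (i * e ^ k) := by
  induction k with
  | zero => simp
  | succ k ih =>
    have : α ^ (k+1) * y ^ i * (α ^ (k+1))⁻¹ = α * (α ^ k * y ^ i * (α ^ k)⁻¹) * α⁻¹ := by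
      group
    rw [this, ih, ← conj_zpow, hy, ← zpow_mul]
    congr 1
    ring

lemma happly (hy : α * y * α⁻¹ = y ^ e) (k : ℕ) (i : ℤ) (w : β) :
    (α ^ k) ((y ^ i) w) = (y ^ (i * e ^ k)) ((α ^ k) w) := by
  have h := hconj hy k i
  have h2 : α ^ k * y ^ i = y ^ (i * e ^ k) * α ^ k := by
    rw [← h]; group
  calc (α ^ k) ((y ^ i) w) = (α ^ k * y ^ i) w := rfl
    _ = (y ^ (i * e ^ k) * α ^ k) w := by rw [h2]
    _ = (y ^ (i * e ^ k)) ((α ^ k) w) := rfl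

lemma pow_inv_left (k : ℕ) (w : β) : (α ^ (k * (orderOf α - 1))) ((α ^ k) w) = w := by
  have h1 : 1 ≤ orderOf α := orderOf_pos α
  have : α ^ (k * (orderOf α - 1)) * α ^ k = 1 := by
    rw [← pow_add]
    have : k * (orderOf α - 1) + k = k * orderOf α := by
      rw [← Nat.mul_succ, Nat.succ_eq_add_one, Nat.sub_add_cancel h1]
    rw [this, pow_mul', pow_orderOf_eq_one, one_pow]
  calc (α ^ (k * (orderOf α - 1))) ((α ^ k) w) = (α ^ (k * (orderOf α - 1)) * α ^ k) w := rfl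
    _ = w := by rw [this]; rfl

lemma pow_inv_right {α : Equiv.Perm β} (k : ℕ) (w : β) :
    (α ^ k) ((α ^ (k * (orderOf α - 1))) w) = w := by
  have h1 : 1 ≤ orderOf α := orderOf_pos α
  have : α ^ k * α ^ (k * (orderOf α - 1)) = 1 := by
    rw [← pow_add]
    have : k + k * (orderOf α - 1) = k * orderOf α := by
      rw [add_comm, ← Nat.mul_succ, Nat.succ_eq_add_one, Nat.sub_add_cancel h1]
    rw [this, pow_mul', pow_orderOf_eq_one, one_pow]
  calc (α ^ k) ((α ^ (k * (orderOf α - 1))) w) = (α ^ k * α ^ (k * (orderOf α - 1))) w := rfl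
    _ = w := by rw [this]; rfl

/-- image of a `y`-orbit under `α ^ k` is a `y`-orbit -/
lemma orbY_image (hy : α * y * α⁻¹ = y ^ e) (k : ℕ) (v : β) :
    (orb y v).image ⇑(α ^ k) = orb y ((α ^ k) v) := by
  ext u
  simp only [Finset.mem_image]
  constructor
  · rintro ⟨w, hw, rfl⟩
    obtain ⟨i, hi⟩ := mem_orb.1 hw
    refine mem_orb.2 ⟨i * e ^ k, ?_⟩
    rw [← hi, happly hy]
  · intro hu
    obtain ⟨i, hi⟩ := mem_orb.1 hu
    set k' := k * (orderOf α - 1) with hk'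
    refine ⟨(α ^ k') u, ?_, ?_⟩
    · refine mem_orb.2 ⟨i * e ^ k', ?_⟩
      rw [← hi, happly hy, pow_inv_left]
    · -- (α ^ k) ((α ^ k') u) = u
      exact pow_inv_right k u

/-- image of an `α`-orbit under `α ^ k` is itself-as-orbit -/
lemma orbA_image (k : ℕ) (v : β) :
    (orb α v).image ⇑(α ^ k) = orb α ((α ^ k) v) := by
  ext u
  simp only [Finset.mem_image]
  constructor
  · rintro ⟨w, hw, rfl⟩
    obtain ⟨i, hi⟩ := mem_orb.1 hw
    refine mem_orb.2 ⟨i, ?_⟩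
    have hmul : α ^ i * α ^ (k:ℤ) = α ^ (k:ℤ) * α ^ i := by
      rw [← zpow_add, ← zpow_add, add_comm]
    calc (α ^ i) ((α ^ k) v) = (α ^ i) ((α ^ (k:ℤ)) v) := by rw [zpow_natCast]
      _ = (α ^ i * α ^ (k:ℤ)) v := rfl
      _ = (α ^ (k:ℤ) * α ^ i) v := by rw [hmul]
      _ = (α ^ (k:ℤ)) ((α ^ i) v) := rfl
      _ = (α ^ k) ((α ^ i) v) := by rw [zpow_natCast]
      _ = (α ^ k) w := by rw [hi]
  · intro hu
    obtain ⟨i, hi⟩ := mem_orb.1 hu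
    set k' := k * (orderOf α - 1) with hk'
    refine ⟨(α ^ k') u, ?_, pow_inv_right k u⟩
    refine mem_orb.2 ⟨(k' : ℤ) + i + (k : ℤ), ?_⟩
    calc (α ^ ((k' : ℤ) + i + (k : ℤ))) v
        = (α ^ ((k':ℤ)) * (α ^ i * α ^ (k:ℤ))) v := by
          rw [← zpow_add, ← zpow_add]; ring_nf
      _ = (α ^ ((k':ℤ))) ((α ^ i) ((α ^ (k:ℤ)) v)) := rfl
      _ = (α ^ k') ((α ^ i) ((α ^ k) v)) := by rw [zpow_natCast, zpow_natCast]
      _ = (α ^ k') u := by rw [hi]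

end conj



lemma alpha_structure {α : Equiv.Perm β} {a b : ℕ} (hne : a ≠ b)
    (hcard : a + b = Fintype.card β) (hα : α.cycleType = {a, b}) :
    ∃ S1 S2 : Finset β, S1.card = a ∧ S2.card = b ∧ Disjoint S1 S2 ∧
      (∀ v : β, orb α v = S1 ∨ orb α v = S2) := by
  classical
  -- support is everything
  have hsum : α.cycleType.sum = α.support.card := α.sum_cycleType
  rw [hα] at hsum
  have hsupcard : α.support.card = Fintype.card β := by
    rw [← hsum]; simp [hcard]
  have hsupp : α.support = Finset.univ := Finset.eq_univ_of_card _ hsupcard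
  -- extract the two cycle factors
  have hct : α.cycleFactorsFinset.val.map (Finset.card ∘ Equiv.Perm.support) = {a, b} := hα
  have hc2 : α.cycleFactorsFinset.val.card = 2 := by
    have := congrArg Multiset.card hct
    simpa using this
  obtain ⟨c1, c2, hfac⟩ := Multiset.card_eq_two.1 hc2
  have hmap : ({c1, c2} : Multiset (Equiv.Perm β)).map (Finset.card ∘ Equiv.Perm.support) = {a, b} := by
    rw [← hfac]; exact hct
  simp only [Multiset.map_cons, Multiset.map_singleton, Multiset.insert_eq_cons, Function.comp_apply] at hmap
  have hc1mem : c1.support.card = a ∨ c1.support.card = b := by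
    have h1 : c1.support.card ∈ ((c1.support.card) ::ₘ {c2.support.card} : Multiset ℕ) := by
      simp
    rw [hmap] at h1
    simpa using h1
  have hcases : (c1.support.card = a ∧ c2.support.card = b) ∨
      (c1.support.card = b ∧ c2.support.card = a) := by
    rcases hc1mem with h | h
    · left
      refine ⟨h, ?_⟩
      rw [h] at hmap
      have := (Multiset.cons_inj_right a).1 hmap
      exact Multiset.singleton_inj.1 this
    · right
      refine ⟨h, ?_⟩
      rw [h, ← Multiset.cons_zero b, Multiset.cons_swap] at hmap
      have := (Multiset.cons_inj_right b).1 hmap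
      rw [Multiset.cons_zero] at this
      exact Multiset.singleton_inj.1 this
  -- facts about orbits
  have hfacmem : ∀ c, c ∈ α.cycleFactorsFinset ↔ c = c1 ∨ c = c2 := by
    intro c
    rw [← Finset.mem_val, hfac]
    simp
  have horb_eq : ∀ v : β, orb α v = (α.cycleOf v).support := by
    intro v
    ext u
    rw [mem_orb, Equiv.Perm.mem_support_cycleOf_iff]
    have : v ∈ α.support := by rw [hsupp]; exact Finset.mem_univ v
    tauto
  have horb : ∀ v : β, orb α v = c1.support ∨ orb α v = c2.support := by
    intro v
    have hv : v ∈ α.support := by rw [hsupp]; exact Finset.mem_univ v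
    have := (Equiv.Perm.cycleOf_mem_cycleFactorsFinset_iff (f := α) (x := v)).2 hv
    rw [hfacmem] at this
    rcases this with h | h
    · left; rw [horb_eq, h]
    · right; rw [horb_eq, h]
  have hdisj : Disjoint c1.support c2.support := by
    have hc1 : c1 ∈ α.cycleFactorsFinset := (hfacmem c1).2 (Or.inl rfl)
    have hc2 : c2 ∈ α.cycleFactorsFinset := (hfacmem c2).2 (Or.inr rfl)
    have hc12 : c1 ≠ c2 := by
      intro h
      rw [h] at hcases
      omega
    have := Equiv.Perm.cycleFactorsFinset_pairwise_disjoint α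
    exact Equiv.Perm.Disjoint.disjoint_support (this hc1 hc2 hc12)
  rcases hcases with ⟨h1, h2⟩ | ⟨h1, h2⟩
  · exact ⟨c1.support, c2.support, h1, h2, hdisj, horb⟩
  · refine ⟨c2.support, c1.support, h2, h1, hdisj.symm, fun v => (horb v).symm⟩


end PCE

open PCE in
/-- Corollary 2.13: let `2 ≤ a < b` with `a ∤ b`, `n = a + b`, and
`gcd(u, e ^ u - 1) = 1` for each `u ∈ {a, b, a + b}`. If `α ∈ Sₙ` is a product of two
disjoint cycles of lengths `a, b` covering all points, then `(e*α)` has only the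
trivial solution `y = 1`. -/
theorem stmt_14 (e : ℤ) (he : e ∉ ({-1, 0, 1} : Set ℤ))
    (a b : ℕ) (ha : 2 ≤ a) (hab : a < b) (hnd : ¬ a ∣ b)
    (n : ℕ) (hn : n = a + b)
    (hgcd : ∀ u ∈ ({a, b, a + b} : Finset ℕ), Int.gcd (u : ℤ) (e ^ u - 1) = 1)
    (α : Equiv.Perm (Fin n)) (hα : α.cycleType = {a, b}) :
    ∀ y : Equiv.Perm (Fin n), α * y * α⁻¹ = y ^ e → y = 1 := by
  classical
  intro y hy
  have hne : a ≠ b := hab.ne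
  have hcardn : a + b = Fintype.card (Fin n) := by simp [hn]
  obtain ⟨S1, S2, hS1, hS2, hdisj, horb⟩ := PCE.alpha_structure hne hcardn hα
  apply Equiv.ext
  intro z
  rw [Equiv.Perm.one_apply]
  set d := Function.minimalPeriod ⇑y z with hd
  have hdpos : 0 < d := T_pos y z
  set O := orb y z with hO
  have hdO : O.card = d := card_orb y z
  have hzO : z ∈ O := self_mem_orb y z
  have hyzO : y z ∈ O := mem_orb.2 ⟨1, by simp⟩
  by_cases hcase : ∀ w ∈ O, orb α w = orb α z
  · -- CASE A : the y-orbit of z is contained in a single α-orbit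
    set S := orb α z with hS
    have hu_ab : S.card = a ∨ S.card = b := by
      rcases horb z with h | h
      · left; rw [hS, h]; exact hS1
      · right; rw [hS, h]; exact hS2
    set u := S.card with hu
    have hOsubS : ∀ w ∈ O, w ∈ S := by
      intro w hw
      have h := hcase w hw
      rw [← h]
      exact self_mem_orb α w
    have hTα : ∀ v ∈ S, (α ^ u) v = v := by
      intro v hv
      have hov : orb α v = S := orb_eq_of_mem hv
      have hmp : Function.minimalPeriod ⇑α v = u := by
        rw [← card_orb, hov]
      rw [show u = Function.minimalPeriod ⇑α v from hmp.symm]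
      exact pow_T α v
    have hz_fix : (α ^ u) z = z := hTα z (self_mem_orb α z)
    have hyz_fix : (α ^ u) (y z) = y z := hTα (y z) (hOsubS _ hyzO)
    have step : (y ^ (e ^ u - 1)) z = z := by
      have h1 := happly hy u 1 z
      rw [hz_fix, one_mul, zpow_one] at h1
      -- h1 : (α ^ u) (y z) = (y ^ (e ^ u)) z
      rw [hyz_fix] at h1
      have : (y ^ (e ^ u - 1)) z = (y ^ (-1 : ℤ)) ((y ^ (e^u : ℤ)) z) := by
        rw [← Equiv.Perm.mul_apply, ← zpow_add]
        congr 1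
        ring
      rw [this, ← h1, zpow_neg_one]
      simp
    have hdvd1 : (d : ℤ) ∣ (e ^ u - 1) := zpow_fix_iff.1 step
    have hridge : ∀ w ∈ S, orb y w ⊆ S ∧ (orb y w).card = d := by
      intro w hw
      obtain ⟨j, hj, hjw⟩ := mem_orb_iff_exists_lt.1 hw
      have himg : (orb y z).image ⇑(α ^ j) = orb y w := by
        rw [orbY_image hy j z, hjw]
      constructor
      · rw [← himg]
        intro u' hu'
        obtain ⟨v, hv, rfl⟩ := Finset.mem_image.1 hu'
        have hvS : v ∈ S := hOsubS v hv
        have h2 : (α ^ j) v ∈ orb α ((α ^ j) z) := by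
          rw [← orbA_image j z]
          exact Finset.mem_image_of_mem _ hvS
        rw [hjw] at h2
        rwa [orb_eq_of_mem hw] at h2
      · rw [← himg, Finset.card_image_of_injective _ (Equiv.injective _)]
        exact hdO
    have hdvd2 : d ∣ u := by
      have := dvd_card_of_orbits (f := y) (C := S) (d := d)
        (fun w hw => (hridge w hw).1) (fun w hw => (hridge w hw).2)
      exact this
    have hu_mem : u ∈ ({a, b, a + b} : Finset ℕ) := by
      rcases hu_ab with h | h
      · exact Finset.mem_insert.2 (Or.inl h)
      · exact Finset.mem_insert.2 (Or.inr (Finset.mem_insert.2 (Or.inl h)))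
    have hg := hgcd u hu_mem
    have hfin : d ∣ 1 := by
      rw [← hg]
      unfold Int.gcd
      apply Nat.dvd_gcd
      · simpa using hdvd2
      · have := Int.natAbs_dvd_natAbs.2 hdvd1
        simpa using this
    have : d = 1 := Nat.dvd_one.1 hfin
    exact Function.minimalPeriod_eq_one_iff_isFixedPt.1 this
  · -- CASE B : the y-orbit meets both α-orbits
    exfalso
    push_neg at hcase
    obtain ⟨w, hwO, hworb⟩ := hcase
    -- find points of O in S1 and in S2
    have hw12 : (∃ w1 ∈ O, orb α w1 = S1) ∧ (∃ w2 ∈ O, orb α w2 = S2) := by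
      rcases horb z with hz1 | hz2 <;> rcases horb w with hw1' | hw2'
      · exact absurd (hw1'.trans hz1.symm) hworb
      · exact ⟨⟨z, hzO, hz1⟩, ⟨w, hwO, hw2'⟩⟩
      · exact ⟨⟨w, hwO, hw1'⟩, ⟨z, hzO, hz2⟩⟩
      · exact absurd (hw2'.trans hz2.symm) hworb
    obtain ⟨⟨w1, hw1O, hw1⟩, ⟨w2, hw2O, hw2⟩⟩ := hw12
    have hw1S1 : w1 ∈ S1 := hw1 ▸ self_mem_orb α w1
    have hw2S2 : w2 ∈ S2 := hw2 ▸ self_mem_orb α w2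
    set P := O ∩ S1 with hPdef
    set Q := O ∩ S2 with hQdef
    have hp_pos : 0 < P.card :=
      Finset.card_pos.2 ⟨w1, Finset.mem_inter.2 ⟨hw1O, hw1S1⟩⟩
    have hOsplit : O = P ∪ Q := by
      ext v
      simp only [hPdef, hQdef, Finset.mem_union, Finset.mem_inter]
      constructor
      · intro hv
        rcases horb v with h | h
        · exact Or.inl ⟨hv, h ▸ self_mem_orb α v⟩
        · exact Or.inr ⟨hv, h ▸ self_mem_orb α v⟩
      · rintro (⟨hv, -⟩ | ⟨hv, -⟩) <;> exact hv
    have hPQdisj : Disjoint P Q :=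
      Disjoint.mono Finset.inter_subset_right Finset.inter_subset_right hdisj
    have hdpq : d = P.card + Q.card := by
      rw [← hdO, hOsplit, Finset.card_union_of_disjoint hPQdisj]
    -- minimal translation period k
    have hexists : ∃ j, 0 < j ∧ orb y ((α ^ j) z) = O := by
      refine ⟨orderOf α, orderOf_pos α, ?_⟩
      rw [pow_orderOf_eq_one]
      rfl
    set k := Nat.find hexists with hk
    obtain ⟨hk0, hkO⟩ : 0 < k ∧ orb y ((α ^ k) z) = O := Nat.find_spec hexists
    -- translation step
    have hstep : ∀ A : ℕ, orb y ((α ^ (A + k)) z) = orb y ((α ^ A) z) := by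
      intro A
      have h1 : (α ^ (A + k)) z = (α ^ A) ((α ^ k) z) := by
        rw [pow_add]; rfl
      rw [h1, ← orbY_image hy A ((α ^ k) z), hkO, orbY_image hy A z]
    have htrans : ∀ m r : ℕ, orb y ((α ^ (k * m + r)) z) = orb y ((α ^ r) z) := by
      intro m
      induction m with
      | zero => intro r; simp
      | succ m ih =>
        intro r
        have : k * (m + 1) + r = (k * m + r) + k := by ring
        rw [this, hstep, ih]
    have hmod : ∀ j : ℕ, orb y ((α ^ j) z) = orb y ((α ^ (j % k)) z) := by
      intro j
      conv_lhs => rw [show j = k * (j / k) + j % k from (Nat.div_add_mod j k).symm]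
      exact htrans _ _
    -- disjointness of distinct translates
    have hdisj_trans : ∀ j1 j2 : ℕ, j1 < j2 → j2 < k →
        Disjoint (orb y ((α ^ j1) z)) (orb y ((α ^ j2) z)) := by
      intro j1 j2 h12 h2k
      by_contra hcon
      obtain ⟨v, hv1, hv2⟩ := Finset.not_disjoint_iff.1 hcon
      have heq : orb y ((α ^ j1) z) = orb y ((α ^ j2) z) := by
        rw [← orb_eq_of_mem hv1, ← orb_eq_of_mem hv2]
      have himg := congrArg (Finset.image ⇑(α ^ (k - j1))) heq
      rw [orbY_image hy (k - j1) _, orbY_image hy (k - j1) _] at himg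
      have e1 : (α ^ (k - j1)) ((α ^ j1) z) = (α ^ k) z := by
        rw [← Equiv.Perm.mul_apply, ← pow_add, Nat.sub_add_cancel (le_of_lt (h12.trans h2k))]
      have e2 : (α ^ (k - j1)) ((α ^ j2) z) = (α ^ (k + (j2 - j1))) z := by
        rw [← Equiv.Perm.mul_apply, ← pow_add]
        congr 2
        omega
      rw [e1, e2] at himg
      have himg2 : orb y ((α ^ (j2 - j1)) z) = O := by
        have h3 : orb y ((α ^ (k + (j2 - j1))) z) = orb y ((α ^ (j2 - j1)) z) := by
          have : k + (j2 - j1) = k * 1 + (j2 - j1) := by ring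
          rw [this, htrans]
        rw [← h3, ← himg, hkO]
      have hlt : j2 - j1 < k := by omega
      exact Nat.find_min hexists hlt ⟨by omega, himg2⟩
    -- block counting: each α-orbit has size k * (its intersection with O)
    have key : ∀ (w0 : Fin n) (S : Finset (Fin n)), w0 ∈ O → orb α w0 = S →
        S.card = k * (O ∩ S).card := by
      intro w0 S hw0O hw0S
      have hSbi : S = (Finset.range k).biUnion (fun j => orb y ((α ^ j) z) ∩ S) := by
        apply Finset.Subset.antisymm
        · intro v hv
          have hv' := hv
          rw [← hw0S] at hv
          obtain ⟨j, hj, hjv⟩ := mem_orb_iff_exists_lt.1 hv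
          have hvmem : v ∈ orb y ((α ^ j) z) := by
            rw [← orbY_image hy j z]
            exact Finset.mem_image.2 ⟨w0, hw0O, hjv⟩
          rw [hmod j] at hvmem
          refine Finset.mem_biUnion.2 ⟨j % k, Finset.mem_range.2 (Nat.mod_lt _ hk0), ?_⟩
          exact Finset.mem_inter.2 ⟨hvmem, hv'⟩
        · intro v hv
          obtain ⟨j, -, hj⟩ := Finset.mem_biUnion.1 hv
          exact (Finset.mem_inter.1 hj).2
      have hpart : ∀ j ∈ Finset.range k, (orb y ((α ^ j) z) ∩ S).card = (O ∩ S).card := by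
        intro j hj
        have hSim : S.image ⇑(α ^ j) = S := by
          rw [← hw0S, orbA_image j w0]
          exact orb_eq_of_mem (mem_orb.2 ⟨(j : ℤ), by simp⟩)
        have h1 : (O ∩ S).image ⇑(α ^ j) = orb y ((α ^ j) z) ∩ S := by
          rw [Finset.image_inter _ _ (Equiv.injective _), hSim, hO, orbY_image hy j z]
        rw [← h1, Finset.card_image_of_injective _ (Equiv.injective _)]
      have hdisj_parts : ∀ j1 ∈ Finset.range k, ∀ j2 ∈ Finset.range k, j1 ≠ j2 →
          Disjoint (orb y ((α ^ j1) z) ∩ S) (orb y ((α ^ j2) z) ∩ S) := by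
        intro j1 hj1 j2 hj2 hne12
        rw [Finset.mem_range] at hj1 hj2
        rcases lt_or_gt_of_ne hne12 with h | h
        · exact Disjoint.mono Finset.inter_subset_left Finset.inter_subset_left
            (hdisj_trans j1 j2 h hj2)
        · exact Disjoint.mono Finset.inter_subset_left Finset.inter_subset_left
            (hdisj_trans j2 j1 h hj1).symm
      have hcb := Finset.card_biUnion hdisj_parts
      rw [← hSbi] at hcb
      rw [hcb, Finset.sum_congr rfl hpart, Finset.sum_const, Finset.card_range, smul_eq_mul]
    have ha_eq : a = k * P.card := by
      have := key w1 S1 hw1O hw1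
      rw [hS1] at this
      exact this
    have hb_eq : b = k * Q.card := by
      have := key w2 S2 hw2O hw2
      rw [hS2] at this
      exact this
    -- α ^ a z lies in O
    have hpow_a : orb y ((α ^ a) z) = O := by
      rw [ha_eq]
      have : k * P.card = k * P.card + 0 := by ring
      rw [this, htrans]
      simp [hO]
    have hαazO : (α ^ a) z ∈ O := by
      rw [← hpow_a]
      exact self_mem_orb y _
    obtain ⟨t, htd, htz⟩ := mem_orb_iff_exists_lt.1 hαazO
    -- the fixed set of α ^ a inside O is exactly P
    have hfixP : O.filter (fun v => (α ^ a) v = v) = P := by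
      ext v
      simp only [Finset.mem_filter, hPdef, Finset.mem_inter]
      constructor
      · rintro ⟨hvO, hvfix⟩
        refine ⟨hvO, ?_⟩
        rcases horb v with h | h
        · rw [← h]; exact self_mem_orb α v
        · exfalso
          have hvS2 : v ∈ S2 := h ▸ self_mem_orb α v
          have hmp : Function.minimalPeriod ⇑α v = b := by
            rw [← card_orb, h, hS2]
          have hper : Function.IsPeriodicPt ⇑α a v := by
            show (⇑α)^[a] v = v
            rw [← Equiv.Perm.coe_pow]
            exact hvfix
          have : b ∣ a := hmp ▸ hper.minimalPeriod_dvd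
          have : b ≤ a := Nat.le_of_dvd (by omega) this
          omega
      · rintro ⟨hvO, hvS1⟩
        refine ⟨hvO, ?_⟩
        have horbv : orb α v = S1 := by
          rcases horb v with h | h
          · exact h
          · exfalso
            have : v ∈ S2 := h ▸ self_mem_orb α v
            exact Finset.disjoint_left.1 hdisj hvS1 this
        have hmp : Function.minimalPeriod ⇑α v = a := by
          rw [← card_orb, horbv, hS1]
        rw [show a = Function.minimalPeriod ⇑α v from hmp.symm]
        exact pow_T α v
    -- condition rewriting
    have hcond : ∀ i : ℕ, ((α ^ a) ((y ^ i) z) = (y ^ i) z) ↔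
        (d : ℤ) ∣ ((e ^ a - 1) * (i : ℤ) + (t : ℤ)) := by
      intro i
      have h1 : (α ^ a) ((y ^ i) z) = (y ^ ((i : ℤ) * e ^ a + (t : ℤ))) z := by
        rw [← zpow_natCast y i, happly hy a (i : ℤ) z, ← htz, ← zpow_natCast y t,
          ← Equiv.Perm.mul_apply, ← zpow_add]
      rw [h1, ← zpow_natCast y i]
      have hiff : ∀ A B : ℤ, ((y ^ A) z = (y ^ B) z ↔ (y ^ (A - B)) z = z) := by
        intro A B
        constructor
        · intro h
          have : (y ^ (A - B)) z = (y ^ (-B)) ((y ^ A) z) := by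
            rw [← Equiv.Perm.mul_apply, ← zpow_add]
            congr 1
            ring
          rw [this, h, ← Equiv.Perm.mul_apply, ← zpow_add]
          simp
        · intro h
          have : (y ^ A) z = (y ^ B) ((y ^ (A - B)) z) := by
            rw [← Equiv.Perm.mul_apply, ← zpow_add]
            congr 1
            ring
          rw [this, h]
      rw [hiff, zpow_fix_iff, ← hd]
      constructor <;> intro hdv <;> [skip; skip] <;>
        · have hre : ((i:ℤ) * e ^ a + (t:ℤ) - (i:ℤ)) = ((e ^ a - 1) * (i:ℤ) + (t:ℤ)) := by ring
          first
            | (rwa [hre] at hdv)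
            | (rwa [← hre] at hdv)
    -- counting
    have hcount : ((Finset.range d).filter
          (fun i : ℕ => (d:ℤ) ∣ ((e ^ a - 1) * (i:ℤ) + (t:ℤ)))).card
        = (O.filter (fun v => (α ^ a) v = v)).card := by
      apply Finset.card_bij (fun i _ => (y ^ i) z)
      · intro i hi
        rw [Finset.mem_filter, Finset.mem_range] at hi
        rw [Finset.mem_filter]
        refine ⟨mem_orb_iff_exists_lt.2 ⟨i, hi.1, rfl⟩, (hcond i).2 hi.2⟩
      · intro i hi j hj hij
        rw [Finset.mem_filter, Finset.mem_range] at hi hj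
        rw [Equiv.Perm.coe_pow, Equiv.Perm.coe_pow] at hij
        exact (Function.iterate_eq_iterate_iff_of_lt_minimalPeriod hi.1 hj.1).1 hij
      · intro v hv
        rw [Finset.mem_filter] at hv
        obtain ⟨i, hi, rfl⟩ := mem_orb_iff_exists_lt.1 hv.1
        refine ⟨i, ?_, rfl⟩
        rw [Finset.mem_filter, Finset.mem_range]
        exact ⟨hi, (hcond i).1 hv.2⟩
    have hPcount : ((Finset.range d).filter
        (fun i : ℕ => (d:ℤ) ∣ ((e ^ a - 1) * (i:ℤ) + (t:ℤ)))).card = P.card := by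
      rw [hcount, hfixP]
    have hp_dvd : P.card ∣ d := by
      rw [← hPcount]
      apply count_lin_dvd d hdpos (e ^ a - 1) (t : ℤ)
      rw [← Finset.card_pos, hPcount]
      exact hp_pos
    -- conclude a ∣ b, contradiction
    have hpq : P.card ∣ Q.card := by
      have h1 : P.card ∣ P.card + Q.card := hdpq ▸ hp_dvd
      exact (Nat.dvd_add_right dvd_rfl).1 h1
    obtain ⟨m, hm⟩ := hpq
    exact hnd ⟨m, by rw [hb_eq, hm, ha_eq]; ring⟩
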